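/- Let F(x) = ∫₀^∞ e^{-t}/(t+x) dt for x > 0, and define F₁(x) = 1/F(x), F_{2m}(x) = 1/(F_{2m−1}(x) − x) for m ≥ 1, and F_{2m+1}(x) = 1/(F_{2m}(x) − 1/m) for m ≥ 1. Then for every positive integer m, F_{2m−1}(x)/x → 1 and F_{2m}(x) → 1/m as x → ∞. -/

import Mathlib

open Real Filter MeasureTheory Set Nat Topology

noncomputable def sInt (n k : ℕ) (x : ℝ) : ℝ :=
  ∫ t in Set.Ioi (0:ℝ), t ^ n * Real.exp (-t) / (t + x) ^ k

lemma integrableOn_pow_exp (n : ℕ) :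
    IntegrableOn (fun t : ℝ => t ^ n * Real.exp (-t)) (Set.Ioi 0) := by
  have h := Real.GammaIntegral_convergent (s := n + 1) (by positivity)
  refine (h.congr_fun ?_ measurableSet_Ioi)
  intro t ht
  dsimp only
  rw [show ((n:ℝ) + 1 - 1) = (n:ℝ) by ring, Real.rpow_natCast]
  ring

lemma integral_pow_exp (n : ℕ) :
    (∫ t in Set.Ioi (0:ℝ), t ^ n * Real.exp (-t)) = (n ! : ℝ) := by
  have h := Real.Gamma_eq_integral (s := (n:ℝ) + 1) (by positivity)
  rw [show ((n:ℝ)+1) = ((n:ℝ)+1) from rfl] at h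
  have h2 : Real.Gamma ((n:ℝ) + 1) = (n ! : ℝ) := by
    exact_mod_cast Real.Gamma_nat_eq_factorial n
  rw [h2] at h
  rw [h]
  refine setIntegral_congr_fun measurableSet_Ioi (fun t ht => ?_)
  rw [show ((n:ℝ) + 1 - 1) = (n:ℝ) by ring, Real.rpow_natCast]
  ring

lemma skernel_cont {x : ℝ} (hx : 0 < x) (n k : ℕ) :
    ContinuousOn (fun t : ℝ => t ^ n * Real.exp (-t) / (t + x) ^ k) (Set.Ici 0) := by
  refine ContinuousOn.div (by fun_prop) (by fun_prop) ?_
  intro t ht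
  have : 0 < t + x := by have := ht.out; linarith
  positivity

lemma skernel_nonneg {x : ℝ} (hx : 0 < x) (n k : ℕ) {t : ℝ} (ht : 0 ≤ t) :
    0 ≤ t ^ n * Real.exp (-t) / (t + x) ^ k := by
  have : 0 < t + x := by linarith
  positivity

lemma skernel_le {x : ℝ} (hx : 0 < x) (n k : ℕ) {t : ℝ} (ht : 0 ≤ t) :
    t ^ n * Real.exp (-t) / (t + x) ^ k ≤ (x ^ k)⁻¹ * (t ^ n * Real.exp (-t)) := by
  rw [← div_eq_inv_mul (t ^ n * Real.exp (-t)) (x ^ k)]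
  have h1 : x ^ k ≤ (t + x) ^ k := by gcongr; linarith
  have h2 : (0:ℝ) < x ^ k := by positivity
  exact div_le_div_of_nonneg_left (by positivity) h2 h1

lemma integrableOn_skernel {x : ℝ} (hx : 0 < x) (n k : ℕ) :
    IntegrableOn (fun t : ℝ => t ^ n * Real.exp (-t) / (t + x) ^ k) (Set.Ioi 0) := by
  refine Integrable.mono' (((integrableOn_pow_exp n).const_mul ((x ^ k)⁻¹)))
    (((skernel_cont hx n k).mono Ioi_subset_Ici_self).aestronglyMeasurable measurableSet_Ioi) ?_
  filter_upwards [ae_restrict_mem measurableSet_Ioi] with t ht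
  rw [Real.norm_eq_abs, abs_of_nonneg (skernel_nonneg hx n k ht.out.le)]
  exact skernel_le hx n k ht.out.le

lemma ibp {x : ℝ} (hx : 0 < x) (n k : ℕ) :
    (n + 1 : ℝ) * sInt n k x = sInt (n+1) k x + k * sInt (n+1) (k+1) x := by
  set g : ℝ → ℝ := fun t => t ^ (n+1) * Real.exp (-t) / (t + x) ^ k with hg
  set g' : ℝ → ℝ := fun t => (n + 1 : ℝ) * (t ^ n * Real.exp (-t) / (t + x) ^ k)
      - t ^ (n+1) * Real.exp (-t) / (t + x) ^ k
      - (k : ℝ) * (t ^ (n+1) * Real.exp (-t) / (t + x) ^ (k+1)) with hg'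
  have hderiv : ∀ t ∈ Set.Ioi (0:ℝ), HasDerivAt g (g' t) t := by
    intro t ht
    have htx : (0:ℝ) < t + x := by have := ht.out; linarith
    have hc : HasDerivAt (fun t : ℝ => t ^ (n+1) * Real.exp (-t))
        ((n + 1 : ℝ) * t ^ n * Real.exp (-t) - t ^ (n+1) * Real.exp (-t)) t := by
      have h2 : HasDerivAt (fun t : ℝ => Real.exp (-t)) (-Real.exp (-t)) t := by
        simpa [Function.comp_def] using (Real.hasDerivAt_exp (-t)).comp t (hasDerivAt_neg t)
      have := (hasDerivAt_pow (n+1) t).mul h2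
      refine this.congr_deriv ?_
      push_cast
      ring
    have hd : HasDerivAt (fun t : ℝ => (t + x) ^ k) ((k : ℝ) * (t + x) ^ (k-1)) t := by
      have := (hasDerivAt_pow k (t+x)).comp t ((hasDerivAt_id t).add_const x)
      simpa [Function.comp_def] using this
    have hdd := hc.div hd (pow_ne_zero k htx.ne')
    refine hdd.congr_deriv ?_
    symm
    rw [hg']
    dsimp only
    rcases k with _ | k'
    · simp; ring
    · have h1 : t + x ≠ 0 := htx.ne'
      rw [Nat.add_sub_cancel]
      field_simp
      ring
  have hcont : ContinuousWithinAt g (Set.Ici 0) 0 :=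
    (skernel_cont hx (n+1) k) 0 (by simp)
  have htop : Tendsto g atTop (𝓝 0) := by
    have hb : Tendsto (fun t : ℝ => (x ^ k)⁻¹ * (t ^ (n+1) * Real.exp (-t))) atTop (𝓝 0) := by
      simpa using (tendsto_pow_mul_exp_neg_atTop_nhds_zero (n+1)).const_mul ((x ^ k)⁻¹)
    refine squeeze_zero' ?_ ?_ hb
    · filter_upwards [eventually_ge_atTop (0:ℝ)] with t ht
      exact skernel_nonneg hx (n+1) k ht
    · filter_upwards [eventually_ge_atTop (0:ℝ)] with t ht
      exact skernel_le hx (n+1) k ht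
  have f'int : IntegrableOn g' (Set.Ioi 0) := by
    exact (((integrableOn_skernel hx n k).const_mul _).sub
      (integrableOn_skernel hx (n+1) k)).sub
      ((integrableOn_skernel hx (n+1) (k+1)).const_mul _)
  have h0 := integral_Ioi_of_hasDerivAt_of_tendsto hcont hderiv f'int htop
  have hg0 : g 0 = 0 := by simp [hg]
  rw [hg0, sub_zero] at h0
  have hI1 : Integrable (fun t : ℝ => (n + 1 : ℝ) * (t ^ n * Real.exp (-t) / (t + x) ^ k))
      (MeasureTheory.volume.restrict (Set.Ioi 0)) := (integrableOn_skernel hx n k).const_mul _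
  have hI2 := integrableOn_skernel hx (n+1) k
  have hI3 : Integrable (fun t : ℝ => (k : ℝ) * (t ^ (n+1) * Real.exp (-t) / (t + x) ^ (k+1)))
      (MeasureTheory.volume.restrict (Set.Ioi 0)) := (integrableOn_skernel hx (n+1) (k+1)).const_mul _
  have e1 : (∫ t in Set.Ioi (0:ℝ), g' t)
      = ((∫ t in Set.Ioi (0:ℝ), ((n + 1 : ℝ) * (t ^ n * Real.exp (-t) / (t + x) ^ k)
            - t ^ (n+1) * Real.exp (-t) / (t + x) ^ k))
        - ∫ t in Set.Ioi (0:ℝ), (k:ℝ) * (t ^ (n+1) * Real.exp (-t) / (t + x) ^ (k+1))) :=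
    integral_sub (hI1.sub hI2) hI3
  rw [e1, integral_sub hI1 hI2, integral_const_mul, integral_const_mul] at h0
  have : (n + 1 : ℝ) * sInt n k x - sInt (n+1) k x - (k:ℝ) * sInt (n+1) (k+1) x = 0 := h0
  linarith

lemma sInt_zero_zero {x : ℝ} (hx : 0 < x) : sInt 0 0 x = 1 := by
  rw [sInt]
  simp only [pow_zero, one_mul, div_one]
  exact integral_exp_neg_Ioi_zero

lemma sInt_alg {x : ℝ} (hx : 0 < x) (n k : ℕ) :
    sInt (n+1) (k+1) x = sInt n k x - x * sInt n (k+1) x := by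
  have h : sInt n k x - x * sInt n (k+1) x
      = ∫ t in Set.Ioi (0:ℝ), (t ^ n * Real.exp (-t) / (t + x) ^ k
          - x * (t ^ n * Real.exp (-t) / (t + x) ^ (k+1))) := by
    rw [integral_sub (integrableOn_skernel hx n k)
      ((integrableOn_skernel hx n (k+1)).const_mul x), integral_const_mul]
    rfl
  rw [h, sInt]
  refine setIntegral_congr_fun measurableSet_Ioi (fun t ht => ?_)
  have htx : t + x ≠ 0 := by have := ht.out; positivity
  field_simp
  ring

noncomputable def rInt (n : ℕ) (x : ℝ) : ℝ := sInt n (n+1) x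

noncomputable def NN : ℕ → ℝ → ℝ
  | 0, _ => 1
  | (m+1), x => (m + 1 : ℝ) * (rInt m x - rInt (m+1) x)

lemma NN_succ {x : ℝ} (hx : 0 < x) (n : ℕ) :
    NN n x - x * rInt n x = NN (n+1) x := by
  rcases n with _ | m
  · have h1 := ibp hx 0 1
    have h2 := sInt_alg hx 0 0
    simp only [NN, rInt]
    rw [sInt_zero_zero hx] at h2
    push_cast at h1 h2 ⊢
    linarith
  · have hA := ibp hx (m+1) (m+2)
    have hB := sInt_alg hx (m+1) (m+1)
    have hC := ibp hx m (m+1)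
    simp only [NN, rInt] at *
    push_cast at hA hB hC ⊢
    linarith

lemma tendsto_xr (n : ℕ) :
    Tendsto (fun x : ℝ => x ^ (n+1) * rInt n x) atTop (𝓝 (n ! : ℝ)) := by
  have key : Tendsto (fun x : ℝ => ∫ t in Set.Ioi (0:ℝ),
      t ^ n * Real.exp (-t) * (x / (t + x)) ^ (n+1)) atTop
      (𝓝 (∫ t in Set.Ioi (0:ℝ), t ^ n * Real.exp (-t))) := by
    apply tendsto_integral_filter_of_dominated_convergence
      (bound := fun t : ℝ => t ^ n * Real.exp (-t))
    · filter_upwards [eventually_gt_atTop (0:ℝ)] with x hx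
      refine (ContinuousOn.aestronglyMeasurable ?_ measurableSet_Ioi)
      refine ContinuousOn.mul (by fun_prop) (ContinuousOn.pow ?_ _)
      refine ContinuousOn.div continuousOn_const (by fun_prop) ?_
      intro t ht
      have := ht.out
      positivity
    · filter_upwards [eventually_gt_atTop (0:ℝ)] with x hx
      filter_upwards [ae_restrict_mem measurableSet_Ioi] with t ht
      have ht0 : (0:ℝ) < t := ht.out
      have h1 : 0 ≤ x / (t + x) := by positivity
      have h2 : x / (t + x) ≤ 1 := by
        rw [div_le_one (by linarith)]; linarith
      have h3 : (x / (t + x)) ^ (n+1) ≤ 1 := pow_le_one₀ h1 h2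
      rw [Real.norm_eq_abs, abs_of_nonneg (by positivity)]
      calc t ^ n * Real.exp (-t) * (x / (t + x)) ^ (n+1)
          ≤ t ^ n * Real.exp (-t) * 1 := by
            have hnn : (0:ℝ) ≤ t ^ n * Real.exp (-t) := by positivity
            exact mul_le_mul_of_nonneg_left h3 hnn
        _ = t ^ n * Real.exp (-t) := by ring
    · exact integrableOn_pow_exp n
    · filter_upwards [ae_restrict_mem measurableSet_Ioi] with t ht
      have ht0 : (0:ℝ) < t := ht.out
      have hfrac : Tendsto (fun x : ℝ => x / (t + x)) atTop (𝓝 1) := by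
        have h1 : Tendsto (fun x : ℝ => t + x) atTop atTop :=
          tendsto_atTop_add_const_left _ t tendsto_id
        have h2 : Tendsto (fun x : ℝ => t * (t + x)⁻¹) atTop (𝓝 0) := by
          simpa using (h1.inv_tendsto_atTop).const_mul t
        have h3 : Tendsto (fun x : ℝ => 1 - t * (t + x)⁻¹) atTop (𝓝 1) := by
          simpa using tendsto_const_nhds.sub h2
        refine h3.congr' ?_
        filter_upwards [eventually_gt_atTop (0:ℝ)] with x hx
        have : t + x ≠ 0 := by positivity
        field_simp
        ring
      have := ((hfrac.pow (n+1)).const_mul (t ^ n * Real.exp (-t)))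
      simpa using this
  rw [integral_pow_exp] at key
  refine key.congr' ?_
  filter_upwards [eventually_gt_atTop (0:ℝ)] with x hx
  rw [rInt, sInt, ← integral_const_mul]
  refine setIntegral_congr_fun measurableSet_Ioi (fun t ht => ?_)
  have ht0 : (0:ℝ) < t := ht.out
  have htx : t + x ≠ 0 := by positivity
  rw [div_pow]
  field_simp

lemma tendsto_xr_lower (n : ℕ) :
    Tendsto (fun x : ℝ => x ^ n * rInt n x) atTop (𝓝 0) := by
  have h := (tendsto_xr n).mul tendsto_inv_atTop_zero
  rw [mul_zero] at h
  refine h.congr' ?_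
  filter_upwards [eventually_gt_atTop (0:ℝ)] with x hx
  field_simp [pow_succ]
  ring

lemma tendsto_xN (n : ℕ) :
    Tendsto (fun x : ℝ => x ^ n * NN n x) atTop (𝓝 (n ! : ℝ)) := by
  rcases n with _ | m
  · simpa [NN] using (tendsto_const_nhds : Tendsto (fun _ : ℝ => (1:ℝ)) atTop (𝓝 1))
  · have h := ((tendsto_xr m).sub (tendsto_xr_lower (m+1))).const_mul ((m:ℝ)+1)
    rw [sub_zero] at h
    have hfac : ((m:ℝ)+1) * (m ! : ℝ) = ((m+1)! : ℝ) := by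
      rw [Nat.factorial_succ]; push_cast; ring
    rw [hfac] at h
    refine h.congr (fun x => ?_)
    simp only [NN]
    ring

lemma ev_pos_of_tendsto {f : ℝ → ℝ} {c : ℝ} (hc : 0 < c) (hf : Tendsto f atTop (𝓝 c)) :
    ∀ᶠ x : ℝ in atTop, 0 < f x := hf.eventually (eventually_gt_nhds hc)

lemma fac_pos_real (n : ℕ) : (0:ℝ) < (n ! : ℝ) := by
  exact_mod_cast n.factorial_pos

lemma ev_r_pos (n : ℕ) : ∀ᶠ x : ℝ in atTop, 0 < rInt n x := by
  filter_upwards [ev_pos_of_tendsto (fac_pos_real n) (tendsto_xr n),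
    eventually_gt_atTop (0:ℝ)] with x h hx
  nlinarith [pow_pos hx (n+1)]

lemma ev_N_pos (n : ℕ) : ∀ᶠ x : ℝ in atTop, 0 < NN n x := by
  filter_upwards [ev_pos_of_tendsto (fac_pos_real n) (tendsto_xN n),
    eventually_gt_atTop (0:ℝ)] with x h hx
  nlinarith [pow_pos hx n]

/-- With `F x = ∫₀^∞ e^{-t}/(t+x) dt`, `F₁ = 1/F`,
`F_{2m} = 1/(F_{2m-1} - x)`, `F_{2m+1} = 1/(F_{2m} - 1/m)`, one has
`F_{2m-1}(x)/x → 1` and `F_{2m}(x) → 1/m` as `x → ∞`, for every `m ≥ 1`. -/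
theorem continued_fraction_expansion_at_infinity
    (F : ℝ → ℝ)
    (hF : ∀ x : ℝ, 0 < x → F x = ∫ t in Set.Ioi (0:ℝ), Real.exp (-t) / (t + x))
    (G : ℕ → ℝ → ℝ)
    (hG1 : ∀ x : ℝ, G 1 x = 1 / F x)
    (hGeven : ∀ m : ℕ, 1 ≤ m → ∀ x : ℝ, G (2 * m) x = 1 / (G (2 * m - 1) x - x))
    (hGodd : ∀ m : ℕ, 1 ≤ m → ∀ x : ℝ, G (2 * m + 1) x = 1 / (G (2 * m) x - 1 / (m : ℝ))) :
    ∀ m : ℕ, 1 ≤ m →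
      Tendsto (fun x : ℝ => G (2 * m - 1) x / x) atTop (nhds 1) ∧
      Tendsto (fun x : ℝ => G (2 * m) x) atTop (nhds (1 / (m : ℝ))) := by
  have hFr : ∀ᶠ x : ℝ in atTop, F x = rInt 0 x := by
    filter_upwards [eventually_gt_atTop (0:ℝ)] with x hx
    rw [hF x hx, rInt, sInt]
    refine setIntegral_congr_fun measurableSet_Ioi (fun t ht => ?_)
    simp
  -- odd-index formula
  have main : ∀ j : ℕ, ∀ᶠ x : ℝ in atTop, G (2*j+1) x = NN j x / rInt j x := by
    intro j
    induction j with
    | zero =>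
      filter_upwards [hFr] with x hx
      rw [show 2*0+1 = 1 from rfl, hG1, hx]
      simp [NN]
    | succ m ih =>
      filter_upwards [ih, ev_r_pos m, ev_N_pos (m+1), eventually_gt_atTop (0:ℝ)]
        with x h1 h2 h3 hx
      have heven := hGeven (m+1) (Nat.le_add_left 1 m) x
      have hodd := hGodd (m+1) (Nat.le_add_left 1 m) x
      have hidx : 2*(m+1) - 1 = 2*m+1 := by omega
      rw [hidx] at heven
      have hG2 : G (2*(m+1)) x = rInt m x / NN (m+1) x := by
        rw [heven, h1]
        have hsub : NN m x / rInt m x - x = NN (m+1) x / rInt m x := by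
          rw [eq_div_iff h2.ne', sub_mul, div_mul_cancel₀ _ h2.ne', ← NN_succ hx m]
        rw [hsub, one_div_div]
      rw [hodd, hG2]
      have hm1 : ((m:ℝ) + 1) ≠ 0 := by positivity
      have hcast : ((m+1 : ℕ) : ℝ) = (m:ℝ) + 1 := by push_cast; ring
      rw [hcast]
      have hsub2 : rInt m x / NN (m+1) x - 1 / ((m:ℝ)+1)
          = rInt (m+1) x / NN (m+1) x := by
        rw [div_sub_div _ _ h3.ne' hm1]
        have hnum : rInt m x * ((m:ℝ)+1) - NN (m+1) x * 1 = rInt (m+1) x * ((m:ℝ)+1) := by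
          simp only [NN]; ring
        rw [hnum, mul_comm (NN (m+1) x) ((m:ℝ)+1), mul_comm (rInt (m+1) x) ((m:ℝ)+1),
          mul_div_mul_left _ _ hm1]
      rw [hsub2, one_div_div]
  have even_form : ∀ j : ℕ, ∀ᶠ x : ℝ in atTop, G (2*j+2) x = rInt j x / NN (j+1) x := by
    intro j
    filter_upwards [main j, ev_r_pos j, eventually_gt_atTop (0:ℝ)] with x h1 h2 hx
    have heven := hGeven (j+1) (Nat.le_add_left 1 j) x
    have hidx : 2*(j+1) - 1 = 2*j+1 := by omega
    have hidx2 : 2*(j+1) = 2*j+2 := by omega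
    rw [hidx, hidx2] at heven
    rw [heven, h1]
    have hsub : NN j x / rInt j x - x = NN (j+1) x / rInt j x := by
      rw [eq_div_iff h2.ne', sub_mul, div_mul_cancel₀ _ h2.ne', ← NN_succ hx j]
    rw [hsub, one_div_div]
  intro m hm
  obtain ⟨j, rfl⟩ : ∃ j, m = j + 1 := ⟨m - 1, by omega⟩
  constructor
  · have hidx : 2*(j+1) - 1 = 2*j+1 := by omega
    rw [hidx]
    have hlim : Tendsto (fun x : ℝ => (x^j * NN j x) / (x^(j+1) * rInt j x)) atTop
        (𝓝 ((j ! : ℝ) / (j ! : ℝ))) :=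
      (tendsto_xN j).div (tendsto_xr j) (fac_pos_real j).ne'
    rw [div_self (fac_pos_real j).ne'] at hlim
    refine hlim.congr' ?_
    filter_upwards [main j, ev_r_pos j, ev_N_pos j, eventually_gt_atTop (0:ℝ)]
      with x h1 h2 h3 hx
    rw [h1]
    have hxj : x^j ≠ 0 := by positivity
    field_simp [pow_succ]
    ring
  · have hidx2 : 2*(j+1) = 2*j+2 := by omega
    rw [hidx2]
    have hlim : Tendsto (fun x : ℝ => (x^(j+1) * rInt j x) / (x^(j+1) * NN (j+1) x)) atTop
        (𝓝 ((j ! : ℝ) / ((j+1)! : ℝ))) :=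
      (tendsto_xr j).div (tendsto_xN (j+1)) (fac_pos_real (j+1)).ne'
    have hfaceq : (j ! : ℝ) / ((j+1)! : ℝ) = 1 / ((j:ℝ)+1) := by
      rw [Nat.factorial_succ]
      push_cast
      rw [div_eq_div_iff (by positivity) (by positivity)]
      ring
    rw [hfaceq] at hlim
    have hcast : ((j+1 : ℕ) : ℝ) = (j:ℝ) + 1 := by push_cast; ring
    rw [hcast]
    refine hlim.congr' ?_
    filter_upwards [even_form j, ev_r_pos j, ev_N_pos (j+1), eventually_gt_atTop (0:ℝ)]
      with x h1 h2 h3 hx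
    rw [h1]
    have hxj : x^(j+1) ≠ 0 := by positivity
    rw [mul_div_mul_left _ _ hxj]
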